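/- Let R be a commutative ring with identity and n ≥ 2. Let Q be a T_n-projective functor and let φ : Q → L_n be a natural linear transformation. Then there exists a natural linear transformation φ̃ : Q → T_n such that φ = β_n ∘ φ̃, where β_n : T_n → L_n denotes the natural surjection given at each R-module V by a_1⊗⋯⊗a_n ↦ [[a_1,a_2],…,a_n]. -/

import Mathlib

open scoped TensorProduct
open PiTensorProduct

noncomputable section

universe u

variable (R : Type u) [CommRing R]

/-- The operator on the `n`-th tensor power of `V` permuting the tensor positions
according to `σ`. -/
def pact (V : Type u) [AddCommGroup V] [Module R V] (n : ℕ) (σ : Equiv.Perm (Fin n)) :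
    (⨂[R]^n V) →ₗ[R] (⨂[R]^n V) :=
  (PiTensorProduct.reindex R (fun _ : Fin n => V) σ).toLinearMap

/-- The functorial action of a linear map on the `n`-th tensor power. -/
def tmap {V W : Type u} [AddCommGroup V] [Module R V] [AddCommGroup W] [Module R W]
    (n : ℕ) (f : V →ₗ[R] W) : (⨂[R]^n V) →ₗ[R] (⨂[R]^n W) :=
  PiTensorProduct.map fun _ => f

/-- Auxiliary operators: `betaAux R V n c k` is the operator on `V^{⊗n}` which applies
the (signed, with signs `c`) left-normed bracketing to the first `k+1` tensor factors. -/
def betaAux (V : Type u) [AddCommGroup V] [Module R V] (n : ℕ) (c : ℕ → R) :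
    ℕ → ((⨂[R]^n V) →ₗ[R] (⨂[R]^n V))
  | 0 => LinearMap.id
  | k + 1 =>
    if h : k + 1 < n then
      (LinearMap.id - c (k + 1) • pact R V n (Fin.cycleRange ⟨k + 1, h⟩)) ∘ₗ
        betaAux V n c k
    else betaAux V n c k

/-- `β_n : V^{⊗n} → V^{⊗n}`, the linear map sending `a₁ ⊗ ⋯ ⊗ a_n` to the left-normed
iterated commutator `[[a₁,a₂],…,a_n]` (with `[a,b] = ab - ba`), regarded inside `V^{⊗n}`. -/
def beta (V : Type u) [AddCommGroup V] [Module R V] (n : ℕ) :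
    (⨂[R]^n V) →ₗ[R] (⨂[R]^n V) :=
  betaAux R V n (fun _ => 1) (n - 1)

/-- `L_n(V) = Im(β_n) ⊆ V^{⊗n}`. -/
def Lsub (V : Type u) [AddCommGroup V] [Module R V] (n : ℕ) : Submodule R (⨂[R]^n V) :=
  LinearMap.range (beta R V n)

variable {n : ℕ} {A : Type u} [AddCommGroup A] [Module R A]

/-- Given a basis `e` of the free module `V̄`, the word `e_{σ(1)} ⊗ ⋯ ⊗ e_{σ(n)}`. -/
def eword (b : Module.Basis (Fin n) R A) (σ : Equiv.Perm (Fin n)) : ⨂[R]^n A :=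
  tprod R fun i => b (σ i)

/-- `γ_n ⊆ V̄^{⊗n}`, the span of the words `e_{σ(1)} ⊗ ⋯ ⊗ e_{σ(n)}` for `σ ∈ Σ_n`. -/
def gammaN (b : Module.Basis (Fin n) R A) : Submodule R (⨂[R]^n A) :=
  Submodule.span R (Set.range (eword R b))

/-- The action of `σ ∈ Σ_n` on `V̄^{⊗n}` by permuting the letters `e_1, …, e_n`,
induced by the linear automorphism `e_i ↦ e_{σ(i)}` of `V̄`. -/
def lact (b : Module.Basis (Fin n) R A) (σ : Equiv.Perm (Fin n)) :
    (⨂[R]^n A) →ₗ[R] (⨂[R]^n A) :=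
  tmap R n (b.equiv b (σ : Fin n ≃ Fin n)).toLinearMap

/-- `Lie(n) = γ_n ∩ L_n(V̄)`. -/
def LieN (b : Module.Basis (Fin n) R A) : Submodule R (⨂[R]^n A) :=
  gammaN R b ⊓ Lsub R A n

/-- The coordinate functional on `V̄^{⊗n}` dual to the word `e_{w(1)} ⊗ ⋯ ⊗ e_{w(n)}`. -/
def lamb (b : Module.Basis (Fin n) R A) (w : Fin n → Fin n) : (⨂[R]^n A) →ₗ[R] R :=
  PiTensorProduct.lift
    ((MultilinearMap.mkPiAlgebra R (Fin n) R).compLinearMap fun i => b.coord (w i))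

/-- The substitution pairing `γ_n ⊗ V^{⊗n} → V^{⊗n}` (extended by zero off `γ_n`):
`(e_{σ(1)} ⊗ ⋯ ⊗ e_{σ(n)}) ⊗ (x_1 ⊗ ⋯ ⊗ x_n) ↦ x_{σ(1)} ⊗ ⋯ ⊗ x_{σ(n)}`,
realizing the canonical identification `γ_n ⊗_{R(Σ_n)} V^{⊗n} ≅ V^{⊗n}`. -/
def cpair (b : Module.Basis (Fin n) R A) (V : Type u) [AddCommGroup V] [Module R V] :
    (⨂[R]^n A) →ₗ[R] (⨂[R]^n V) →ₗ[R] (⨂[R]^n V) :=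
  ∑ σ : Equiv.Perm (Fin n), (lamb R b ⇑σ).smulRight (pact R V n σ⁻¹)

/-- The submodule of balancing relations defining `M ⊗_{R(Σ_n)} V^{⊗n}` for a
`Σ_n`-invariant submodule `M` of `V̄^{⊗n}` (where the right `R(Σ_n)`-module structure
on `M` is the letter action composed with inversion). -/
def relSpan (b : Module.Basis (Fin n) R A) (M : Submodule R (⨂[R]^n A))
    (V : Type u) [AddCommGroup V] [Module R V] :
    Submodule R (↥M ⊗[R] (⨂[R]^n V)) :=
  Submodule.span R
    {z | ∃ (σ : Equiv.Perm (Fin n)) (q : M) (h : lact R b σ ↑q ∈ M) (x : ⨂[R]^n V),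
      z = (⟨lact R b σ ↑q, h⟩ : M) ⊗ₜ[R] x - (q : ↥M) ⊗ₜ[R] (pact R V n σ⁻¹ x)}



section Aux

variable {R : Type u} [CommRing R] {n : ℕ} {A : Type u} [AddCommGroup A] [Module R A]
variable {V W : Type u} [AddCommGroup V] [Module R V] [AddCommGroup W] [Module R W]

lemma pext {M : Type u} [AddCommGroup M] [Module R M] {f g : (⨂[R]^n V) →ₗ[R] M}
    (h : ∀ a : Fin n → V, f (tprod R a) = g (tprod R a)) : f = g :=
  PiTensorProduct.ext (MultilinearMap.ext h)

lemma pact_tprod (σ : Equiv.Perm (Fin n)) (a : Fin n → V) :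
    pact R V n σ (tprod R a) = tprod R (fun i => a (σ.symm i)) := by
  simp [pact]

lemma tmap_tprod (f : V →ₗ[R] W) (a : Fin n → V) :
    tmap R n f (tprod R a) = tprod R (fun i => f (a i)) := by
  simp [tmap]

lemma pact_pact (σ τ : Equiv.Perm (Fin n)) (x : ⨂[R]^n V) :
    pact R V n σ (pact R V n τ x) = pact R V n (σ * τ) x := by
  have h : pact R V n σ ∘ₗ pact R V n τ = pact R V n (σ * τ) := by
    apply pext; intro a
    simp only [LinearMap.comp_apply, pact_tprod]
    rfl
  exact DFunLike.congr_fun h x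

lemma tmap_pact (f : V →ₗ[R] W) (σ : Equiv.Perm (Fin n)) (x : ⨂[R]^n V) :
    tmap R n f (pact R V n σ x) = pact R W n σ (tmap R n f x) := by
  have h : tmap R n f ∘ₗ pact R V n σ = pact R W n σ ∘ₗ tmap R n f := by
    apply pext; intro a
    simp only [LinearMap.comp_apply, pact_tprod, tmap_tprod]
  exact DFunLike.congr_fun h x

lemma lamb_tprod (b : Module.Basis (Fin n) R A) (w : Fin n → Fin n) (a : Fin n → A) :
    lamb R b w (tprod R a) = ∏ i, b.coord (w i) (a i) := by
  simp [lamb]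

lemma lamb_pact (b : Module.Basis (Fin n) R A) (w : Fin n → Fin n) (τ : Equiv.Perm (Fin n))
    (x : ⨂[R]^n A) : lamb R b w (pact R A n τ x) = lamb R b (w ∘ τ) x := by
  have h : lamb R b w ∘ₗ pact R A n τ = lamb R b (w ∘ τ) := by
    apply pext; intro a
    simp only [LinearMap.comp_apply, pact_tprod, lamb_tprod, Function.comp]
    rw [← Equiv.prod_comp τ (fun i => b.coord (w i) (a (τ.symm i)))]
    simp
  exact DFunLike.congr_fun h x

lemma cpair_apply (b : Module.Basis (Fin n) R A) (t : ⨂[R]^n A) (x : ⨂[R]^n V) :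
    cpair R b V t x = ∑ σ : Equiv.Perm (Fin n), lamb R b ⇑σ t • pact R V n σ⁻¹ x := by
  simp [cpair, LinearMap.sum_apply]

lemma tmap_cpair (b : Module.Basis (Fin n) R A) (f : V →ₗ[R] W) (t : ⨂[R]^n A) (x : ⨂[R]^n V) :
    tmap R n f (cpair R b V t x) = cpair R b W t (tmap R n f x) := by
  rw [cpair_apply, cpair_apply, map_sum]
  refine Finset.sum_congr rfl fun σ _ => ?_
  rw [LinearMap.map_smul, tmap_pact]

lemma cpair_pact (b : Module.Basis (Fin n) R A) (τ : Equiv.Perm (Fin n)) (t : ⨂[R]^n A)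
    (x : ⨂[R]^n V) :
    cpair R b V (pact R A n τ t) x = pact R V n τ (cpair R b V t x) := by
  rw [cpair_apply, cpair_apply, map_sum]
  refine Fintype.sum_equiv (Equiv.mulRight τ) _ _ fun σ => ?_
  simp only [Equiv.coe_mulRight]
  rw [lamb_pact, LinearMap.map_smul, pact_pact]
  have h1 : (⇑σ ∘ ⇑τ) = ⇑(σ * τ) := rfl
  have h2 : τ * (σ * τ)⁻¹ = σ⁻¹ := by group
  rw [h1, h2]

lemma betaAux_cpair (b : Module.Basis (Fin n) R A) (c : ℕ → R) (k : ℕ) (t : ⨂[R]^n A)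
    (x : ⨂[R]^n V) :
    cpair R b V (betaAux R A n c k t) x = betaAux R V n c k (cpair R b V t x) := by
  induction k with
  | zero => simp [betaAux]
  | succ k ih =>
    by_cases h : k + 1 < n
    · simp only [betaAux, dif_pos h, LinearMap.comp_apply, LinearMap.sub_apply,
        LinearMap.id_apply, LinearMap.smul_apply, map_sub, map_smul, ih, cpair_pact]
    · simp only [betaAux, dif_neg h, ih]

lemma beta_cpair (b : Module.Basis (Fin n) R A) (t : ⨂[R]^n A) (x : ⨂[R]^n V) :
    cpair R b V (beta R A n t) x = beta R V n (cpair R b V t x) :=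
  betaAux_cpair b _ _ t x

lemma expand_words (b : Module.Basis (Fin n) R A) (t : ⨂[R]^n A) :
    ∑ w : Fin n → Fin n, lamb R b w t • tprod R (fun i => b (w i)) = t := by
  have h : (∑ w : Fin n → Fin n,
      (lamb R b w).smulRight (tprod R (fun i => b (w i)))) = LinearMap.id := by
    apply pext; intro a
    simp only [LinearMap.sum_apply, LinearMap.smulRight_apply, LinearMap.id_apply,
      lamb_tprod]
    have ha : (tprod R a : ⨂[R]^n A)
        = tprod R (fun i => ∑ j, b.repr (a i) j • b j) := by
      congr 1; funext i; rw [Module.Basis.sum_repr]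
    rw [ha, MultilinearMap.map_sum]
    refine Finset.sum_congr rfl fun w _ => ?_
    rw [MultilinearMap.map_smul_univ]
    simp [Module.Basis.coord_apply]
  have := DFunLike.congr_fun h t
  simpa using this

end Aux

/-- Let `Q` be a `T_n`-projective functor (a functor from `R`-modules to
`R`-modules which is a retract of `T_n : V ↦ V^{⊗n}` via natural transformations `s, r`
with `r ∘ s = id`) and let `φ : Q → L_n` be a natural linear transformation.  Then there
exists a natural linear transformation `φ̃ : Q → T_n` with `φ = β_n ∘ φ̃`. -/
theorem statement6 (R : Type u) [CommRing R] (n : ℕ) (hn : 2 ≤ n)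
    (Q : ∀ (V : Type u) [AddCommGroup V] [Module R V], Type u)
    [∀ (V : Type u) [AddCommGroup V] [Module R V], AddCommGroup (Q V)]
    [∀ (V : Type u) [AddCommGroup V] [Module R V], Module R (Q V)]
    (Qmap : ∀ (V W : Type u) [AddCommGroup V] [Module R V] [AddCommGroup W] [Module R W],
      (V →ₗ[R] W) → (Q V →ₗ[R] Q W))
    (Qmap_id : ∀ (V : Type u) [AddCommGroup V] [Module R V],
      Qmap V V LinearMap.id = LinearMap.id)
    (Qmap_comp : ∀ (U V W : Type u) [AddCommGroup U] [Module R U] [AddCommGroup V]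
      [Module R V] [AddCommGroup W] [Module R W] (f : U →ₗ[R] V) (g : V →ₗ[R] W),
      Qmap U W (g ∘ₗ f) = (Qmap V W g) ∘ₗ (Qmap U V f))
    (s : ∀ (V : Type u) [AddCommGroup V] [Module R V], Q V →ₗ[R] ⨂[R]^n V)
    (hs : ∀ (V W : Type u) [AddCommGroup V] [Module R V] [AddCommGroup W] [Module R W]
      (f : V →ₗ[R] W), (s W) ∘ₗ (Qmap V W f) = (tmap R n f) ∘ₗ (s V))
    (r : ∀ (V : Type u) [AddCommGroup V] [Module R V], (⨂[R]^n V) →ₗ[R] Q V)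
    (hr : ∀ (V W : Type u) [AddCommGroup V] [Module R V] [AddCommGroup W] [Module R W]
      (f : V →ₗ[R] W), (r W) ∘ₗ (tmap R n f) = (Qmap V W f) ∘ₗ (r V))
    (hrs : ∀ (V : Type u) [AddCommGroup V] [Module R V], (r V) ∘ₗ (s V) = LinearMap.id)
    (φ : ∀ (V : Type u) [AddCommGroup V] [Module R V], Q V →ₗ[R] ↥(Lsub R V n))
    (hφ : ∀ (V W : Type u) [AddCommGroup V] [Module R V] [AddCommGroup W] [Module R W]
      (f : V →ₗ[R] W) (y : Q V),
      (↑(φ W (Qmap V W f y)) : ⨂[R]^n W) = tmap R n f ↑(φ V y)) :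
    ∃ ψ : ∀ (V : Type u) [AddCommGroup V] [Module R V], Q V →ₗ[R] ⨂[R]^n V,
      (∀ (V W : Type u) [AddCommGroup V] [Module R V] [AddCommGroup W] [Module R W]
        (f : V →ₗ[R] W), (ψ W) ∘ₗ (Qmap V W f) = (tmap R n f) ∘ₗ (ψ V)) ∧
      (∀ (V : Type u) [AddCommGroup V] [Module R V] (y : Q V),
        (↑(φ V y) : ⨂[R]^n V) = beta R V n (ψ V y)) := by
  classical
  set A : Type u := Fin n → R with hA
  let b : Module.Basis (Fin n) R A := Pi.basisFun R (Fin n)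
  set E : ⨂[R]^n A := tprod R (fun i => b i) with hE
  set t : ⨂[R]^n A := ↑(φ A (r A E)) with ht
  -- vanishing of non-surjective coordinates of t
  have hvan : ∀ w : Fin n → Fin n, ¬ Function.Surjective w → lamb R b w t = 0 := by
    intro w hw
    obtain ⟨m, hm⟩ : ∃ m : Fin n, ∀ i, w i ≠ m := by
      simpa [Function.Surjective, not_forall, eq_comm] using hw
    let f : A →ₗ[R] A := Module.Basis.constr b ℕ (fun j => if j = m then 0 else b j)
    have hf : ∀ j, f (b j) = if j = m then 0 else b j := fun j => Module.Basis.constr_basis b ℕ _ j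
    have hfE : tmap R n f E = 0 := by
      rw [hE, tmap_tprod]
      exact MultilinearMap.map_coord_zero (PiTensorProduct.tprod R) m (by simp [hf])
    have hft : tmap R n f t = 0 := by
      have h1 : tmap R n f t = ↑(φ A (Qmap A A f (r A E))) := (hφ A A f (r A E)).symm
      have h2 : Qmap A A f (r A E) = r A (tmap R n f E) :=
        (DFunLike.congr_fun (hr A A f) E).symm
      rw [h1, h2, hfE, map_zero, map_zero, Submodule.coe_zero]
    have hlam : lamb R b w (tmap R n f t) = lamb R b w t := by
      have hcoord : ∀ k : Fin n, k ≠ m → b.coord k ∘ₗ f = b.coord k := by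
        intro k hk
        apply b.ext; intro j
        simp only [LinearMap.comp_apply, hf]
        by_cases hj : j = m
        · subst hj
          simp [Module.Basis.coord_apply, Module.Basis.repr_self, Finsupp.single_apply, hk.symm]
        · simp [hj]
      have h : lamb R b w ∘ₗ tmap R n f = lamb R b w := by
        apply pext; intro a
        simp only [LinearMap.comp_apply, tmap_tprod, lamb_tprod]
        refine Finset.prod_congr rfl fun i _ => ?_
        exact DFunLike.congr_fun (hcoord (w i) (hm i)) (a i)
      exact DFunLike.congr_fun h t
    rw [← hlam, hft, map_zero]
  -- generic reconstruction
  have hgen : cpair R b A t E = t := by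
    have h1 : cpair R b A t E
        = ∑ σ : Equiv.Perm (Fin n), lamb R b ⇑σ t • tprod R (fun i => b (σ i)) := by
      rw [cpair_apply]
      refine Finset.sum_congr rfl fun σ _ => ?_
      rw [hE, pact_tprod]
      rfl
    rw [h1]
    set F : (Fin n → Fin n) → ⨂[R]^n A :=
      fun w => lamb R b w t • tprod R (fun i => b (w i)) with hF
    have hFzero : ∀ w, ¬ Function.Bijective w → F w = 0 := by
      intro w hw
      have hsurj : ¬ Function.Surjective w := fun hs => hw (Finite.surjective_iff_bijective.mp hs)
      rw [hF]; dsimp only; rw [hvan w hsurj, zero_smul]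
    calc (∑ σ : Equiv.Perm (Fin n), F ⇑σ)
        = ∑ w ∈ Finset.image (fun σ : Equiv.Perm (Fin n) => ⇑σ) Finset.univ, F w :=
          (Finset.sum_image (fun σ _ τ _ h => Equiv.coe_fn_injective h)).symm
      _ = ∑ w : Fin n → Fin n, F w :=
          Finset.sum_subset (Finset.subset_univ _) (fun w _ hw =>
            hFzero w (fun hb => hw (Finset.mem_image.mpr
              ⟨Equiv.ofBijective w hb, Finset.mem_univ _, rfl⟩)))
      _ = t := expand_words b t
  -- generic determination of φ ∘ r
  have hkey : ∀ (V : Type u) [AddCommGroup V] [Module R V] (x : ⨂[R]^n V),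
      cpair R b V t x = ↑(φ V (r V x)) := by
    intro V _ _ x
    have h : cpair R b V t = (Lsub R V n).subtype ∘ₗ (φ V) ∘ₗ (r V) := by
      apply pext; intro a
      let f : A →ₗ[R] V := Module.Basis.constr b ℕ a
      have hfb : ∀ j, f (b j) = a j := fun j => Module.Basis.constr_basis b ℕ a j
      have hEa : tmap R n f E = tprod R a := by
        rw [hE, tmap_tprod]
        congr 1; funext i; exact hfb i
      calc cpair R b V t (tprod R a)
          = cpair R b V t (tmap R n f E) := by rw [hEa]
        _ = tmap R n f (cpair R b A t E) := (tmap_cpair b f t E).symm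
        _ = tmap R n f t := by rw [hgen]
        _ = ↑(φ V (Qmap A V f (r A E))) := (hφ A V f (r A E)).symm
        _ = ↑(φ V (r V (tmap R n f E))) := by
            have h2 : r V (tmap R n f E) = Qmap A V f (r A E) :=
              DFunLike.congr_fun (hr A V f) E
            rw [h2]
        _ = ((Lsub R V n).subtype ∘ₗ (φ V) ∘ₗ (r V)) (tprod R a) := by rw [hEa]; rfl
    exact DFunLike.congr_fun h x
  -- choose a preimage of t under beta
  obtain ⟨u, hu⟩ : ∃ u, beta R A n u = t := (φ A (r A E)).2
  refine ⟨fun V _ _ => cpair R b V u ∘ₗ s V, ?_, ?_⟩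
  · intro V W _ _ _ _ f
    have h1 : tmap R n f ∘ₗ cpair R b V u = cpair R b W u ∘ₗ tmap R n f :=
      LinearMap.ext fun x => tmap_cpair b f u x
    calc (cpair R b W u ∘ₗ s W) ∘ₗ Qmap V W f
        = cpair R b W u ∘ₗ (s W ∘ₗ Qmap V W f) := by rw [LinearMap.comp_assoc]
      _ = cpair R b W u ∘ₗ (tmap R n f ∘ₗ s V) := by rw [hs V W f]
      _ = (cpair R b W u ∘ₗ tmap R n f) ∘ₗ s V := by rw [LinearMap.comp_assoc]
      _ = (tmap R n f ∘ₗ cpair R b V u) ∘ₗ s V := by rw [h1]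
      _ = tmap R n f ∘ₗ (cpair R b V u ∘ₗ s V) := by rw [LinearMap.comp_assoc]
  · intro V _ _ y
    calc (↑(φ V y) : ⨂[R]^n V)
        = ↑(φ V (r V (s V y))) := by
          have h2 : r V (s V y) = y := DFunLike.congr_fun (hrs V) y
          rw [h2]
      _ = cpair R b V t (s V y) := (hkey V (s V y)).symm
      _ = cpair R b V (beta R A n u) (s V y) := by rw [hu]
      _ = beta R V n (cpair R b V u (s V y)) := beta_cpair b u (s V y)
      _ = beta R V n ((cpair R b V u ∘ₗ s V) y) := rfl

end
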